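/- Second reduction formula in the third parameter: for z ≠ 0, γ ≠ 0, α ≠ 0, E_{α,β}^{γ+1}(z) = [E_{α,β−α−1}^γ(z) + (1 − β + α) E_{α,β−α}^γ(z)] / (αγz). -/

import Mathlib

set_option maxHeartbeats 1000000

open scoped Real
open Complex Filter

private lemma exp_le_div (u y : ℝ) (hu : 0 < u) :
    Real.exp (-(y^2) / (2*u^2)) ≤ u / Real.sqrt (u^2 + y^2) := by
  have hu2 : (0:ℝ) < u^2 := by positivity
  have hE : (0:ℝ) < Real.exp (y^2/(2*u^2)) := Real.exp_pos _
  have h2 : u^2 + y^2 ≤ (u * Real.exp (y^2/(2*u^2)))^2 := by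
    have : (u * Real.exp (y^2/(2*u^2)))^2 = u^2 * Real.exp (y^2/u^2) := by
      rw [mul_pow, sq (Real.exp _), ← Real.exp_add]
      ring_nf
    rw [this]
    have := Real.add_one_le_exp (y^2/u^2)
    have h3 : u^2 * (y^2/u^2 + 1) ≤ u^2 * Real.exp (y^2/u^2) :=
      mul_le_mul_of_nonneg_left this (le_of_lt hu2)
    calc u^2 + y^2 = u^2 * (y^2/u^2 + 1) := by field_simp; ring
    _ ≤ _ := h3
  have hs : Real.sqrt (u^2 + y^2) ≤ u * Real.exp (y^2/(2*u^2)) := by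
    calc Real.sqrt (u^2+y^2) ≤ Real.sqrt ((u * Real.exp (y^2/(2*u^2)))^2) :=
          Real.sqrt_le_sqrt h2
    _ = u * Real.exp (y^2/(2*u^2)) := Real.sqrt_sq (by positivity)
  have hspos : 0 < Real.sqrt (u^2 + y^2) := by
    apply Real.sqrt_pos.2; positivity
  rw [le_div_iff₀ hspos, show -(y^2) / (2*u^2) = -(y^2/(2*u^2)) by ring,
    Real.exp_neg, inv_mul_le_iff₀ hE]
  calc Real.sqrt (u^2+y^2) ≤ u * Real.exp (y^2/(2*u^2)) := hs
  _ = Real.exp (y^2/(2*u^2)) * u := mul_comm _ _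

private lemma sum_inv_sq_le (x : ℝ) (hx : 1 < x) (n : ℕ) :
    ∑ j ∈ Finset.range n, 1/(x+j)^2 ≤ 1/(x-1) := by
  have key : ∀ j ∈ Finset.range n, 1/(x+(j:ℝ))^2 ≤
      (fun j : ℕ => 1/(x+(j:ℝ)-1)) j - (fun j : ℕ => 1/(x+(j:ℝ)-1)) (j+1) := by
    intro j _
    have h1 : (0:ℝ) < x + j - 1 := by
      have : (0:ℝ) ≤ j := Nat.cast_nonneg j
      linarith
    have h2 : (0:ℝ) < x + j := by linarith
    simp only [Nat.cast_add, Nat.cast_one]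
    rw [show x + ((j:ℝ)+1) - 1 = x + j by ring]
    rw [div_sub_div _ _ (ne_of_gt h1) (ne_of_gt h2)]
    rw [div_le_div_iff₀ (by positivity) (by positivity)]
    nlinarith
  calc ∑ j ∈ Finset.range n, 1/(x+(j:ℝ))^2
      ≤ ∑ j ∈ Finset.range n, ((fun j : ℕ => 1/(x+(j:ℝ)-1)) j
          - (fun j : ℕ => 1/(x+(j:ℝ)-1)) (j+1)) := Finset.sum_le_sum key
  _ = 1/(x+(0:ℕ)-1) - 1/(x+(n:ℝ)-1) := by rw [Finset.sum_range_sub']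
  _ ≤ 1/(x-1) := by
      have h1 : (0:ℝ) < x + n - 1 := by
        have : (0:ℝ) ≤ n := Nat.cast_nonneg n
        linarith
      have : (0:ℝ) ≤ 1/(x+(n:ℝ)-1) := by positivity
      simp only [Nat.cast_zero, add_zero]
      linarith

private lemma gamma_lb (z : ℂ) (hz : 1 < z.re) :
    Real.Gamma z.re * Real.exp (-(z.im^2) / (2*(z.re - 1))) ≤ ‖Complex.Gamma z‖ := by
  set x := z.re
  set y := z.im
  set c := Real.exp (-(y^2) / (2*(x - 1))) with hc
  have hx0 : 0 < x := by linarith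
  -- per-n inequality
  have key : ∀ n : ℕ, 1 ≤ n → Real.GammaSeq x n * c ≤ ‖Complex.GammaSeq z n‖ := by
    intro n hn
    have hnR : (0:ℝ) < n := by exact_mod_cast hn
    have habs : ∀ j : ℕ, ‖z + j‖ = Real.sqrt ((x+j)^2 + y^2) := by
      intro j
      rw [Complex.norm_def, Complex.normSq_apply]
      simp only [Complex.add_re, Complex.natCast_re, Complex.add_im, Complex.natCast_im, add_zero]
      ring_nf
      simp only [x, y]
      ring_nf
    have hterm : ∀ j : ℕ, Real.exp (-(y^2)/(2*(x+j)^2)) ≤ (x+j) / ‖z + j‖ := by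
      intro j
      rw [habs j]
      exact exp_le_div (x+j) y (by positivity)
    have habspos : ∀ j : ℕ, 0 < ‖z + j‖ := by
      intro j
      rw [habs j]
      apply Real.sqrt_pos.2
      positivity
    -- product bound
    have hprod : c ≤ (∏ j ∈ Finset.range (n+1), (x+(j:ℝ))) /
        (∏ j ∈ Finset.range (n+1), ‖z + j‖) := by
      rw [← Finset.prod_div_distrib]
      have hgen : ∀ t : ℝ, -(y^2)/(2*t) = -(y^2/2) * (1/t) := fun t => by ring
      calc c ≤ Real.exp (∑ j ∈ Finset.range (n+1), (-(y^2)/(2*(x+(j:ℝ))^2))) := by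
            apply Real.exp_le_exp.2
            have hs := sum_inv_sq_le x hz (n+1)
            have heq : ∑ j ∈ Finset.range (n+1), (-(y^2)/(2*(x+(j:ℝ))^2))
                = -(y^2/2) * ∑ j ∈ Finset.range (n+1), 1/(x+(j:ℝ))^2 := by
              rw [Finset.mul_sum]
              exact Finset.sum_congr rfl fun j _ => hgen ((x+(j:ℝ))^2)
            rw [heq, hgen (x-1)]
            exact mul_le_mul_of_nonpos_left hs (neg_nonpos.2 (by positivity))
      _ = ∏ j ∈ Finset.range (n+1), Real.exp (-(y^2)/(2*(x+(j:ℝ))^2)) := Real.exp_sum _ _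
      _ ≤ ∏ j ∈ Finset.range (n+1), ((x+(j:ℝ)) / ‖z + j‖) := by
            apply Finset.prod_le_prod
            · intro j _; positivity
            · intro j _; exact hterm j
    -- compute abs of GammaSeq
    have hA : ‖Complex.GammaSeq z n‖
        = (n:ℝ)^x * (Nat.factorial n) / ∏ j ∈ Finset.range (n+1), ‖z + j‖ := by
      rw [Complex.GammaSeq, norm_div, norm_mul, norm_prod]
      congr 2
      · rw [show ((n:ℂ)) = ((n:ℝ):ℂ) by push_cast; ring]
        exact Complex.norm_cpow_eq_rpow_re_of_pos hnR z
      · exact Complex.norm_natCast _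
    rw [hA, Real.GammaSeq]
    set A := (n:ℝ)^x * (Nat.factorial n) with hAdef
    have hApos : 0 < A := by
      apply mul_pos (Real.rpow_pos_of_pos hnR x)
      exact_mod_cast Nat.factorial_pos n
    have hP1 : 0 < ∏ j ∈ Finset.range (n+1), (x+(j:ℝ)) := by
      apply Finset.prod_pos; intro j _; positivity
    have hP2 : 0 < ∏ j ∈ Finset.range (n+1), ‖z + j‖ := by
      apply Finset.prod_pos; intro j _; exact habspos j
    rw [div_mul_eq_mul_div, div_le_div_iff₀ hP1 hP2]
    calc A * c * ∏ j ∈ Finset.range (n+1), ‖z + j‖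
        ≤ A * ((∏ j ∈ Finset.range (n+1), (x+(j:ℝ))) /
            (∏ j ∈ Finset.range (n+1), ‖z + j‖))
            * ∏ j ∈ Finset.range (n+1), ‖z + j‖ := by
          apply mul_le_mul_of_nonneg_right _ hP2.le
          exact mul_le_mul_of_nonneg_left hprod hApos.le
    _ = A * ∏ j ∈ Finset.range (n+1), (x+(j:ℝ)) := by
          field_simp
  have hL1 : Tendsto (fun n => Real.GammaSeq x n * c) atTop (nhds (Real.Gamma x * c)) :=
    (Real.GammaSeq_tendsto_Gamma x).mul_const c
  have hL2 : Tendsto (fun n => ‖Complex.GammaSeq z n‖) atTop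
      (nhds (‖Complex.Gamma z‖)) :=
    (continuous_norm.tendsto _).comp (Complex.GammaSeq_tendsto_Gamma z)
  exact le_of_tendsto_of_tendsto hL1 hL2 (Filter.eventually_atTop.2 ⟨1, key⟩)

private lemma poch_nonneg (k : ℕ) (t : ℝ) (ht : 0 ≤ t) :
    0 ≤ (ascPochhammer ℝ k).eval t := by
  induction k with
  | zero => simp
  | succ n ih =>
    rw [ascPochhammer_succ_eval]
    have : (0:ℝ) ≤ t + n := by positivity
    positivity

private lemma poch_abs_le (k : ℕ) (γ : ℂ) :
    ‖(ascPochhammer ℂ k).eval γ‖ ≤ (ascPochhammer ℝ k).eval (‖γ‖) := by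
  induction k with
  | zero => simp
  | succ n ih =>
    rw [ascPochhammer_succ_eval, ascPochhammer_succ_eval, norm_mul]
    apply mul_le_mul ih _ (norm_nonneg _) (poch_nonneg _ _ (norm_nonneg _))
    calc ‖γ + n‖ ≤ ‖γ‖ + ‖(n:ℂ)‖ := norm_add_le _ _
    _ = ‖γ‖ + n := by rw [Complex.norm_natCast]

private lemma poch_le_pow_mul_fact (k : ℕ) (t : ℝ) (ht : 0 ≤ t) (g : ℕ) (hg1 : 1 ≤ g)
    (htg : t ≤ g) : (ascPochhammer ℝ k).eval t ≤ (g:ℝ)^k * (Nat.factorial k) := by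
  induction k with
  | zero => simp
  | succ n ih =>
    rw [ascPochhammer_succ_eval]
    have h1 : t + n ≤ (g:ℝ) * (n+1) := by
      have hg1' : (1:ℝ) ≤ g := by exact_mod_cast hg1
      have hn : (0:ℝ) ≤ n := Nat.cast_nonneg n
      nlinarith
    calc (ascPochhammer ℝ n).eval t * (t + n)
        ≤ ((g:ℝ)^n * (Nat.factorial n)) * ((g:ℝ) * (n+1)) := by
          apply mul_le_mul ih h1 (by positivity) (by positivity)
    _ = (g:ℝ)^(n+1) * (Nat.factorial (n+1)) := by
          rw [Nat.factorial_succ]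
          push_cast
          ring

private lemma pow_sub_le_factorial (N : ℕ) : ∀ n : ℕ, N ^ (n - N) ≤ n.factorial := by
  intro n
  induction n with
  | zero => simp
  | succ n ih =>
    rcases le_or_gt (n+1) N with h | h
    · simp [Nat.sub_eq_zero_of_le h, Nat.one_le_iff_ne_zero.2 (Nat.factorial_ne_zero _)]
    · have hNn : N ≤ n := Nat.lt_succ_iff.mp h
      rw [Nat.succ_sub hNn, pow_succ, Nat.factorial_succ]
      calc N ^ (n - N) * N ≤ n.factorial * (n+1) := Nat.mul_le_mul ih (le_of_lt h)
      _ = (n+1) * n.factorial := Nat.mul_comm _ _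

private lemma gamma_fact_le (x : ℝ) (hx : 2 ≤ x) :
    ((Nat.floor x - 1).factorial : ℝ) ≤ Real.Gamma x := by
  have hm2 : 2 ≤ Nat.floor x := Nat.le_floor (by exact_mod_cast hx)
  have hmx : ((Nat.floor x : ℕ) : ℝ) ≤ x := Nat.floor_le (by linarith)
  have h1 : Real.Gamma (Nat.floor x) = ((Nat.floor x - 1).factorial : ℝ) := by
    have : ((Nat.floor x : ℕ) : ℝ) = ((Nat.floor x - 1 : ℕ) : ℝ) + 1 := by
      have : 1 ≤ Nat.floor x := by omega
      push_cast [Nat.cast_sub this]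
      ring
    rw [this, Real.Gamma_nat_eq_factorial]
  rw [← h1]
  rcases eq_or_lt_of_le hmx with h | h
  · rw [h]
  · exact le_of_lt (Real.Gamma_strictMonoOn_Ici (by
      simp only [Set.mem_Ici]; exact_mod_cast hm2) (by
      simp only [Set.mem_Ici]; linarith) h)

private lemma prabhakar_summable (α β γ z : ℂ) (hα : 0 < α.re) :
    Summable (fun k : ℕ => (ascPochhammer ℂ k).eval γ * z ^ k /
      ((Nat.factorial k : ℂ) * Complex.Gamma (α * k + β))) := by
  set a := α.re with ha
  set b := β.re with hb
  set c : ℝ := |α.im| + |β.im| + 1 with hcdef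
  have hc1 : 1 ≤ c := by
    have := abs_nonneg α.im; have := abs_nonneg β.im; rw [hcdef]; linarith
  set D : ℝ := c^2 / a with hD
  have hD0 : 0 ≤ D := by positivity
  set g : ℕ := Nat.ceil (‖γ‖) + 1 with hg
  have hg1 : 1 ≤ g := Nat.le_add_left 1 _
  have hγg : ‖γ‖ ≤ g := le_trans (Nat.le_ceil _) (by exact_mod_cast Nat.le_succ _)
  set R : ℝ := g * ‖z‖ * Real.exp D with hR
  have hR0 : 0 ≤ R := by positivity
  -- choose N
  obtain ⟨N, hN1, hN⟩ : ∃ N : ℕ, 1 ≤ N ∧ 4*R+4 ≤ (N:ℝ)^a := by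
    have h := (tendsto_rpow_atTop hα).comp tendsto_natCast_atTop_atTop (α := ℕ)
    exact ((eventually_ge_atTop 1).and (h.eventually_ge_atTop (4*R+4))).exists.imp
      (fun N hN => ⟨hN.1, hN.2⟩)
  have hN1R : (1:ℝ) ≤ N := by exact_mod_cast hN1
  set c₀ : ℝ := (N:ℝ)^(b - 2 - N) with hc₀
  have hc₀pos : 0 < c₀ := Real.rpow_pos_of_pos (by linarith) _
  -- affine tendsto
  have haff : Tendsto (fun k : ℕ => a * k + b) atTop atTop := by
    apply tendsto_atTop_add_const_right
    exact Tendsto.const_mul_atTop hα tendsto_natCast_atTop_atTop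
  apply Summable.of_norm_bounded_eventually_nat (g := fun k => (1/4:ℝ)^k * c₀⁻¹)
  · exact (summable_geometric_of_lt_one (by norm_num) (by norm_num)).mul_right _
  filter_upwards [haff.eventually_ge_atTop 2, haff.eventually_ge_atTop ((N:ℝ)+2),
    tendsto_natCast_atTop_atTop.eventually_ge_atTop (1:ℝ),
    tendsto_natCast_atTop_atTop.eventually_ge_atTop (2*(1-b)/a)] with k h2 hN2 hk1 hkb
  -- basic facts about w = α k + β
  set w : ℂ := α * k + β with hw
  have hwre : w.re = a * k + b := by simp [hw, Complex.add_re, Complex.mul_re, a, b]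
  have hwim : w.im = α.im * k + β.im := by simp [hw, Complex.add_im, Complex.mul_im]
  set x : ℝ := a * k + b with hx
  have hx2 : 2 ≤ x := h2
  have hx1 : 1 < x := by linarith
  -- bound on E
  set E : ℝ := w.im^2 / (2*(x-1)) with hE
  have hEk : E ≤ D * k := by
    have h1 : |w.im| ≤ c * k := by
      rw [hwim]
      calc |α.im * k + β.im| ≤ |α.im * (k:ℝ)| + |β.im| := abs_add_le _ _
      _ = |α.im| * k + |β.im| := by rw [abs_mul, Nat.abs_cast]
      _ ≤ c * k := by rw [hcdef]; nlinarith [abs_nonneg α.im, abs_nonneg β.im]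
    have h2' : w.im^2 ≤ c^2 * k^2 := by
      have := abs_nonneg w.im
      nlinarith [_root_.sq_abs w.im]
    have hden : 0 < 2*(x-1) := by linarith
    rw [hE, div_le_iff₀ hden]
    have hkey : c^2 * (k:ℝ) ≤ 2 * D * (x - 1) := by
      rw [hD, hx]
      have : 2 * (c^2/a) * (a * k + b - 1) = 2*c^2*(k:ℝ) + 2*c^2*(b-1)/a := by
        field_simp
        ring
      rw [this]
      have hkb' : 2*(1-b)/a ≤ (k:ℝ) := hkb
      have : -(2*c^2*(b-1)/a) ≤ c^2 * k := by
        have h3 : (2*(1-b)/a) * c^2 ≤ (k:ℝ) * c^2 :=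
          mul_le_mul_of_nonneg_right hkb' (by positivity)
        calc -(2*c^2*(b-1)/a) = (2*(1-b)/a) * c^2 := by ring
        _ ≤ (k:ℝ) * c^2 := h3
        _ = c^2 * k := mul_comm _ _
      linarith
    calc w.im^2 ≤ c^2*k^2 := h2'
    _ = (c^2 * k) * k := by ring
    _ ≤ (2*D*(x-1)) * k := mul_le_mul_of_nonneg_right hkey (Nat.cast_nonneg k)
    _ = D * k * (2*(x-1)) := by ring
  -- Gamma lower bound at w
  have hglb : Real.Gamma x * Real.exp (-E) ≤ ‖Complex.Gamma w‖ := by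
    have := gamma_lb w (by rw [hwre]; exact hx1)
    rw [hwre] at this
    calc Real.Gamma x * Real.exp (-E)
        = Real.Gamma x * Real.exp (-(w.im^2) / (2*(x-1))) := by
          rw [hE]; congr 1; congr 1; ring
    _ ≤ _ := this
  -- real Gamma lower bound by geometric
  have hfloor : (N:ℝ) + 1 ≤ (Nat.floor x : ℝ) := by
    have h1 : (N + 1 : ℕ) ≤ Nat.floor x := Nat.le_floor (by push_cast; linarith)
    exact_mod_cast h1
  have hggeo : (4*R+4)^k * c₀ ≤ Real.Gamma x := by
    have hm : N + 1 ≤ Nat.floor x := by exact_mod_cast hfloor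
    have h1 : ((N:ℝ)) ^ ((Nat.floor x - 1 - N : ℕ)) ≤ ((Nat.floor x - 1).factorial : ℝ) := by
      exact_mod_cast pow_sub_le_factorial N (Nat.floor x - 1)
    have hcast : (((Nat.floor x - 1 - N : ℕ)) : ℝ) = (Nat.floor x : ℝ) - 1 - N := by
      have : N ≤ Nat.floor x - 1 := by omega
      push_cast [Nat.cast_sub this, Nat.cast_sub (by omega : 1 ≤ Nat.floor x)]
      ring
    have hfx : x - 1 ≤ (Nat.floor x : ℝ) := by
      have := Nat.lt_floor_add_one x
      linarith
    have h2 : (N:ℝ) ^ (x - 2 - N) ≤ ((N:ℝ)) ^ ((Nat.floor x - 1 - N : ℕ)) := by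
      rw [← Real.rpow_natCast (N:ℝ) ((Nat.floor x - 1 - N : ℕ)), hcast]
      apply Real.rpow_le_rpow_of_exponent_le hN1R
      linarith
    have h3 : (4*R+4)^k * c₀ ≤ (N:ℝ) ^ (x - 2 - N) := by
      have hexp : x - 2 - (N:ℝ) = a * k + (b - 2 - N) := by rw [hx]; ring
      rw [hexp, Real.rpow_add (by linarith : (0:ℝ) < N), hc₀]
      apply mul_le_mul_of_nonneg_right _ (le_of_lt (Real.rpow_pos_of_pos (by linarith) _))
      rw [Real.rpow_mul (by linarith : (0:ℝ) ≤ N), Real.rpow_natCast]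
      exact pow_le_pow_left₀ (by positivity) hN k
    calc (4*R+4)^k * c₀ ≤ (N:ℝ) ^ (x - 2 - N) := h3
    _ ≤ ((N:ℝ)) ^ ((Nat.floor x - 1 - N : ℕ)) := h2
    _ ≤ ((Nat.floor x - 1).factorial : ℝ) := h1
    _ ≤ Real.Gamma x := gamma_fact_le x hx2
  -- now the chain
  have hGpos : 0 < Real.Gamma x := Real.Gamma_pos_of_pos (by linarith)
  have hfacpos : (0:ℝ) < (Nat.factorial k : ℝ) := by exact_mod_cast Nat.factorial_pos k
  have hnum : ‖(ascPochhammer ℂ k).eval γ‖ * ‖z‖ ^ k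
      ≤ ((g:ℝ)^k * (Nat.factorial k)) * ‖z‖ ^ k := by
    apply mul_le_mul_of_nonneg_right _ (by positivity)
    calc ‖(ascPochhammer ℂ k).eval γ‖
        ≤ (ascPochhammer ℝ k).eval (‖γ‖) := poch_abs_le k γ
    _ ≤ (g:ℝ)^k * (Nat.factorial k) :=
        poch_le_pow_mul_fact k _ (norm_nonneg _) g hg1 hγg
  have habs : ‖(ascPochhammer ℂ k).eval γ * z ^ k /
      ((Nat.factorial k : ℂ) * Complex.Gamma w)‖
      = ‖(ascPochhammer ℂ k).eval γ‖ * ‖z‖ ^ k /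
        ((Nat.factorial k : ℝ) * ‖Complex.Gamma w‖) := by
    rw [norm_div, norm_mul, norm_mul, norm_pow, Complex.norm_natCast]
  rw [habs]
  have hdenpos : 0 < (Nat.factorial k : ℝ) * (Real.Gamma x * Real.exp (-E)) := by positivity
  calc ‖(ascPochhammer ℂ k).eval γ‖ * ‖z‖ ^ k /
        ((Nat.factorial k : ℝ) * ‖Complex.Gamma w‖)
      ≤ ((g:ℝ)^k * (Nat.factorial k)) * ‖z‖ ^ k /
        ((Nat.factorial k : ℝ) * (Real.Gamma x * Real.exp (-E))) := by
        apply div_le_div₀ (by positivity) hnum hdenpos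
        exact mul_le_mul_of_nonneg_left hglb hfacpos.le
  _ = ((g:ℝ) * ‖z‖)^k * Real.exp E / Real.Gamma x := by
        rw [Real.exp_neg, mul_pow]
        field_simp
  _ ≤ ((g:ℝ) * ‖z‖)^k * (Real.exp D)^k / ((4*R+4)^k * c₀) := by
        apply div_le_div₀ (by positivity) _ (by positivity) hggeo
        apply mul_le_mul_of_nonneg_left _ (by positivity)
        rw [← Real.exp_nat_mul]
        apply Real.exp_le_exp.2
        calc E ≤ D * k := hEk
        _ = k * D := mul_comm _ _
  _ = (R/(4*R+4))^k * c₀⁻¹ := by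
        rw [div_pow, hR, mul_pow, mul_pow]
        field_simp
        ring
  _ ≤ (1/4)^k * c₀⁻¹ := by
        apply mul_le_mul_of_nonneg_right _ (by positivity)
        apply pow_le_pow_left₀ (by positivity)
        rw [div_le_div_iff₀ (by linarith) (by norm_num)]
        linarith

/-- The Prabhakar (three-parameter Mittag-Leffler) function, defined by its
entire power series, with reciprocal Gamma understood as `0` at poles. -/
noncomputable def prabhakar (α β γ z : ℂ) : ℂ :=
  ∑' k : ℕ, (ascPochhammer ℂ k).eval γ * z ^ k / ((Nat.factorial k : ℂ) * Complex.Gamma (α * k + β))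

private lemma inv_gamma_sub_one (s : ℂ) :
    (Complex.Gamma (s-1))⁻¹ = (s-1) * (Complex.Gamma s)⁻¹ := by
  by_cases h : Complex.Gamma (s-1) = 0
  · rcases (Complex.Gamma_eq_zero_iff _).1 h with ⟨m, hm⟩
    rcases Nat.eq_zero_or_pos m with h0 | hpos
    · rw [h, inv_zero, hm, h0]
      simp
    · have hs : Complex.Gamma s = 0 := by
        rw [Complex.Gamma_eq_zero_iff]
        refine ⟨m - 1, ?_⟩
        have : s = -(m:ℂ) + 1 := by linear_combination hm
        rw [this, Nat.cast_sub hpos]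
        push_cast
        ring
      simp [h, hs]
  · have hs1 : s - 1 ≠ 0 := by
      intro h0
      apply h
      rw [h0]
      exact Complex.Gamma_zero
    have : Complex.Gamma s = (s-1) * Complex.Gamma (s-1) := by
      have := Complex.Gamma_add_one (s-1) hs1
      rw [sub_add_cancel] at this
      exact this
    rw [this, mul_inv, ← mul_assoc, mul_inv_cancel₀ hs1, one_mul]

private lemma poch_succ_left_eval (k : ℕ) (γ : ℂ) :
    (ascPochhammer ℂ (k+1)).eval γ = γ * (ascPochhammer ℂ k).eval (γ+1) := by
  rw [ascPochhammer_succ_left, Polynomial.eval_mul, Polynomial.eval_X, Polynomial.eval_comp,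
    Polynomial.eval_add, Polynomial.eval_X, Polynomial.eval_one]

theorem prabhakar_reduction' (α β γ : ℂ) (hα : 0 < α.re) (hα0 : α ≠ 0) (hγ : γ ≠ 0)
    (z : ℂ) (hz : z ≠ 0) :
    prabhakar α β (γ + 1) z =
      (prabhakar α (β - α - 1) γ z + (1 - β + α) * prabhakar α (β - α) γ z) / (α * γ * z) := by
  set c : ℂ := 1 - β + α with hc
  set g : ℕ → ℂ := fun k => (ascPochhammer ℂ k).eval γ * z ^ k /
      ((Nat.factorial k : ℂ) * Complex.Gamma (α * k + (β - α - 1))) with hgdef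
  set h : ℕ → ℂ := fun k => (ascPochhammer ℂ k).eval γ * z ^ k /
      ((Nat.factorial k : ℂ) * Complex.Gamma (α * k + (β - α))) with hhdef
  set G : ℕ → ℂ := fun k => α * k *
      ((ascPochhammer ℂ k).eval γ * z ^ k /
        ((Nat.factorial k : ℂ) * Complex.Gamma (α * k + (β - α)))) with hGdef
  have hsum_g : Summable g := prabhakar_summable α (β - α - 1) γ z hα
  have hsum_h : Summable h := prabhakar_summable α (β - α) γ z hα
  -- termwise identity g + c h = G
  have key : ∀ k : ℕ, g k + c * h k = G k := by
    intro k
    have h1 : α * k + (β - α - 1) = (α * k + (β - α)) - 1 := by ring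
    have h2 : (Complex.Gamma (α * k + (β - α - 1)))⁻¹
        = (α * k + (β - α) - 1) * (Complex.Gamma (α * k + (β - α)))⁻¹ := by
      rw [h1]
      exact inv_gamma_sub_one _
    simp only [hgdef, hhdef, hGdef, div_eq_mul_inv, mul_inv]
    rw [h2]
    ring
  -- G is summable
  have hsum_G : Summable G := by
    have : Summable (fun k => g k + c * h k) := hsum_g.add (hsum_h.mul_left c)
    exact this.congr key
  -- G (k+1) = α γ z * f₁ k
  have hGsucc : ∀ k : ℕ, G (k+1) = α * γ * z *
      ((ascPochhammer ℂ k).eval (γ+1) * z ^ k /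
        ((Nat.factorial k : ℂ) * Complex.Gamma (α * k + β))) := by
    intro k
    have hk1 : ((k:ℂ) + 1) ≠ 0 := by
      exact_mod_cast Nat.cast_add_one_ne_zero (R := ℂ) k
    have hfac : ((Nat.factorial k : ℂ)) ≠ 0 := by
      exact_mod_cast Nat.cast_ne_zero.2 (Nat.factorial_ne_zero k)
    have harg : α * ((k:ℂ)+1) + (β - α) = α * k + β := by ring
    simp only [hGdef]
    push_cast [Nat.factorial_succ, poch_succ_left_eval]
    rw [harg, pow_succ]
    simp only [div_eq_mul_inv, mul_inv]
    generalize (Complex.Gamma (α * ↑k + β))⁻¹ = t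
    field_simp
  -- assemble
  have hG0 : G 0 = 0 := by simp [hGdef]
  have hstep : prabhakar α (β - α - 1) γ z + c * prabhakar α (β - α) γ z
      = α * γ * z * prabhakar α β (γ + 1) z := by
    have e1 : prabhakar α (β - α - 1) γ z + c * prabhakar α (β - α) γ z
        = ∑' k : ℕ, (g k + c * h k) := by
      rw [prabhakar, prabhakar, ← tsum_mul_left]
      exact (hsum_g.tsum_add (hsum_h.mul_left c)).symm
    rw [e1, tsum_congr key, hsum_G.tsum_eq_zero_add, hG0, zero_add]
    calc ∑' k : ℕ, G (k+1)
        = ∑' k : ℕ, α * γ * z * ((ascPochhammer ℂ k).eval (γ+1) * z ^ k /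
          ((Nat.factorial k : ℂ) * Complex.Gamma (α * k + β))) := tsum_congr hGsucc
    _ = α * γ * z * prabhakar α β (γ + 1) z := by rw [tsum_mul_left, prabhakar]
  have hne : α * γ * z ≠ 0 := by
    exact mul_ne_zero (mul_ne_zero hα0 hγ) hz
  rw [hstep, mul_comm, mul_div_assoc, div_self hne, mul_one]
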